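/- Let I be a squarefree stable monomial ideal in a skew polynomial ring, with its minimal generators ordered by the reverse degree lexicographic order. Then I has linear quotients with set(u) = {i : i < max(u), i ∉ supp(u)} for every minimal generator u. -/
import Mathlib


open Finset

/-- Reverse degree lexicographic comparison on exponent vectors: `a <_rdlex b` iff `a` has
larger total degree, or the degrees agree and at the last position where they differ, `a`
has the larger exponent. -/
def rdlexLT {n : ℕ} (a b : Fin n → ℕ) : Prop :=
  (∑ i, b i) < (∑ i, a i) ∨
    ((∑ i, a i) = (∑ i, b i) ∧ ∃ t, b t < a t ∧ ∀ s, t < s → a s = b s)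

lemma rdlex_asymm {n : ℕ} {a b : Fin n → ℕ} (h1 : rdlexLT a b) (h2 : rdlexLT b a) : False := by
  rcases h1 with h1 | ⟨e1, t1, h1, g1⟩ <;> rcases h2 with h2 | ⟨e2, t2, h2, g2⟩
  · omega
  · omega
  · omega
  · rcases lt_trichotomy t1 t2 with h | h | h
    · have := g1 t2 h; omega
    · subst h; omega
    · have := g2 t1 h; omega

lemma pi_exists_add_of_le {n : ℕ} {a b : Fin n → ℕ} (h : ∀ x, a x ≤ b x) : ∃ c, b = a + c :=
  ⟨b - a, funext fun x => by simp only [Pi.add_apply, Pi.sub_apply]; have := h x; omega⟩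

lemma exists_max_pred {n : ℕ} (p : Fin n → Prop) [DecidablePred p] (h : ∃ t, p t) :
    ∃ M, p M ∧ ∀ x, p x → x ≤ M := by
  obtain ⟨t, ht⟩ := h
  have hne : (Finset.univ.filter p).Nonempty := ⟨t, by simp [ht]⟩
  refine ⟨(Finset.univ.filter p).max' hne, ?_, fun x hx => Finset.le_max' _ x (by simp [hx])⟩
  have := (Finset.univ.filter p).max'_mem hne
  simpa using this

/-- a squarefree stable ideal, with minimal generators `x^(u 0), …, x^(u (m-1))`
listed in (descending) reverse degree lexicographic order, has linear quotients with
`set(u_j) = {i : i < max(u_j), i ∉ supp(u_j)}`. -/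
theorem squarefree_stable_linear_quotients {n m : ℕ} (u : Fin m → (Fin n → ℕ))
    (hsqf : ∀ (j : Fin m) (i : Fin n), u j i ≤ 1)
    (hmin : ∀ i j : Fin m, i ≠ j → ¬ ∃ c, u j = u i + c)
    (hstab : ∀ (j : Fin m) (M : Fin n), (u j M ≠ 0 ∧ ∀ t, M < t → u j t = 0) →
      ∀ i : Fin n, i < M → u j i = 0 →
        ∃ (j' : Fin m) (c : Fin n → ℕ), Pi.single i 1 + (u j - Pi.single M 1) = u j' + c)
    (horder : ∀ i j : Fin m, i < j → rdlexLT (u j) (u i)) :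
    ∀ (j : Fin m) (w : Fin n → ℕ),
      (∃ i : Fin m, i < j ∧ ∃ c, w + u j = u i + c) ↔
      ∃ s : Fin n, ((∃ t, s < t ∧ u j t ≠ 0) ∧ u j s = 0) ∧ 1 ≤ w s := by
  intro j w
  constructor
  · -- forward direction
    rintro ⟨i, hij, c, hc⟩
    have hlt := horder i j hij
    have hdvd : ∀ x, u i x ≤ w x + u j x := by
      intro x
      have := congrFun hc x
      simp only [Pi.add_apply] at this
      omega
    -- u j is not zero
    have hjne : ∃ t, u j t ≠ 0 := by
      by_contra h
      push_neg at h
      have hs : (∑ x, u j x) = 0 := Finset.sum_eq_zero (fun x _ => h x)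
      rcases hlt with h1 | ⟨e1, t1, h1, _⟩
      · omega
      · have := h t1; omega
    obtain ⟨M, hMne, hMub⟩ := exists_max_pred (fun t => u j t ≠ 0) hjne
    have hMmax : ∀ t, M < t → u j t = 0 := by
      intro t ht
      by_contra h
      have := hMub t h
      omega
    have key : ∀ k : ℕ, ∀ p : Fin m,
        (∑ x, u p x) < (∑ x, u j x) →
        (∀ x, u p x ≤ w x + u j x) →
        (Finset.univ.filter (fun t => M < t ∧ u p t ≠ 0)).card ≤ k →
        ∃ s : Fin n, ((∃ t, s < t ∧ u j t ≠ 0) ∧ u j s = 0) ∧ 1 ≤ w s := by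
      intro k
      induction k with
      | zero =>
        intro p hdeg hdv hcard
        by_cases hex : ∃ s, s < M ∧ u j s < u p s
        · obtain ⟨s, hsM, hs⟩ := hex
          have h1 := hsqf p s
          have h2 := hdv s
          exact ⟨s, ⟨⟨M, hsM, hMne⟩, by omega⟩, by omega⟩
        · exfalso
          push_neg at hex
          have hTex : ∃ t, M < t ∧ u p t ≠ 0 := by
            by_contra hT
            push_neg at hT
            have hle : ∀ x, u p x ≤ u j x := by
              intro x
              rcases lt_trichotomy x M with h | h | h
              · exact hex x h
              · have h1 := hsqf p x
                have h2 : u j x ≠ 0 := h ▸ hMne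
                omega
              · have := hT x h
                omega
            have hpj : p ≠ j := by intro h; subst h; omega
            exact hmin p j hpj (pi_exists_add_of_le hle)
          obtain ⟨t0, ht0⟩ := hTex
          have ht0T : t0 ∈ Finset.univ.filter (fun t => M < t ∧ u p t ≠ 0) :=
            Finset.mem_filter.mpr ⟨Finset.mem_univ t0, ht0⟩
          have := Finset.card_pos.mpr ⟨t0, ht0T⟩
          omega
      | succ k ih =>
        intro p hdeg hdv hcard
        by_cases hex : ∃ s, s < M ∧ u j s < u p s
        · obtain ⟨s, hsM, hs⟩ := hex
          have h1 := hsqf p s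
          have h2 := hdv s
          exact ⟨s, ⟨⟨M, hsM, hMne⟩, by omega⟩, by omega⟩
        · push_neg at hex
          have hTex : ∃ t, M < t ∧ u p t ≠ 0 := by
            by_contra hT
            push_neg at hT
            have hle : ∀ x, u p x ≤ u j x := by
              intro x
              rcases lt_trichotomy x M with h | h | h
              · exact hex x h
              · have h1 := hsqf p x
                have h2 : u j x ≠ 0 := h ▸ hMne
                omega
              · have := hT x h
                omega
            have hpj : p ≠ j := by intro h; subst h; omega
            exact hmin p j hpj (pi_exists_add_of_le hle)
          obtain ⟨s0, ⟨hMs0, hps0⟩, hub⟩ :=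
            exists_max_pred (fun t => M < t ∧ u p t ≠ 0) hTex
          have hs0T : s0 ∈ Finset.univ.filter (fun t => M < t ∧ u p t ≠ 0) :=
            Finset.mem_filter.mpr ⟨Finset.mem_univ s0, hMs0, hps0⟩
          have hs0max : ∀ t, s0 < t → u p t = 0 := by
            intro t ht
            by_contra h
            have := hub t ⟨lt_trans hMs0 ht, h⟩
            omega
          have hi0 : ∃ i0, u j i0 ≠ 0 ∧ u p i0 = 0 := by
            by_contra h
            push_neg at h
            have hle : ∀ x, u j x ≤ u p x := by
              intro x
              have h1 := hsqf j x
              by_cases hx : u j x = 0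
              · omega
              · have := h x hx; omega
            have : (∑ x, u j x) ≤ ∑ x, u p x := Finset.sum_le_sum (fun x _ => hle x)
            omega
          obtain ⟨i0, hji0, hpi0⟩ := hi0
          have hi0M : i0 ≤ M := hMub i0 hji0
          have hi0s0 : i0 < s0 := lt_of_le_of_lt hi0M hMs0
          have hi0ne : i0 ≠ s0 := ne_of_lt hi0s0
          obtain ⟨p', c', hc'⟩ := hstab p s0 ⟨hps0, hs0max⟩ i0 hi0s0 hpi0
          have hval : ∀ x, u p' x + c' x =
              (if x = i0 then 1 else 0) + (u p x - if x = s0 then 1 else 0) := by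
            intro x
            have h0 := congrFun hc' x
            simp only [Pi.add_apply, Pi.sub_apply, Pi.single_apply] at h0
            omega
          have hptw : ∀ x, u p' x + c' x + (if x = s0 then 1 else 0)
              = u p x + (if x = i0 then 1 else 0) := by
            intro x
            have h0 := hval x
            by_cases hxi : x = i0
            · have hxs : ¬ x = s0 := fun h => hi0ne (hxi.symm.trans h)
              rw [if_neg hxs, if_pos hxi] at h0 ⊢
              have h1 : u p x = 0 := by rw [hxi]; exact hpi0
              omega
            · by_cases hxs : x = s0
              · rw [if_pos hxs, if_neg hxi] at h0 ⊢
                have h1 : u p x ≠ 0 := by rw [hxs]; exact hps0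
                have h2 := hsqf p x
                omega
              · rw [if_neg hxs, if_neg hxi] at h0 ⊢
                omega
          have hsums : (∑ x, u p' x) + (∑ x, c' x) + 1 = (∑ x, u p x) + 1 := by
            have h2 : (∑ x, (u p' x + c' x + (if x = s0 then 1 else 0)))
                = ∑ x, (u p x + (if x = i0 then 1 else 0)) :=
              Finset.sum_congr rfl (fun x _ => hptw x)
            simp only [Finset.sum_add_distrib, Finset.sum_ite_eq', Finset.mem_univ,
              if_pos] at h2
            omega
          have hdeg' : (∑ x, u p' x) < ∑ x, u j x := by omega
          have hdv' : ∀ x, u p' x ≤ w x + u j x := by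
            intro x
            have h0 := hval x
            have h3 := hdv x
            by_cases hxi : x = i0
            · have hxs : ¬ x = s0 := fun h => hi0ne (hxi.symm.trans h)
              rw [if_neg hxs, if_pos hxi] at h0
              have h1 : u p x = 0 := by rw [hxi]; exact hpi0
              have h2 : u j x ≠ 0 := by rw [hxi]; exact hji0
              omega
            · by_cases hxs : x = s0
              · rw [if_pos hxs, if_neg hxi] at h0
                omega
              · rw [if_neg hxs, if_neg hxi] at h0
                omega
          have hcard' : (Finset.univ.filter (fun t => M < t ∧ u p' t ≠ 0)).card ≤ k := by
            have hsub : Finset.univ.filter (fun t => M < t ∧ u p' t ≠ 0) ⊆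
                (Finset.univ.filter (fun t => M < t ∧ u p t ≠ 0)).erase s0 := by
              intro t ht
              rw [Finset.mem_filter] at ht
              obtain ⟨-, hMt, hpt⟩ := ht
              have h0 := hval t
              have hti0 : ¬ t = i0 := by
                intro h
                rw [h] at hMt
                omega
              have hts0 : ¬ t = s0 := by
                intro h
                rw [if_neg hti0, if_pos h] at h0
                have h1 : u p t ≤ 1 := hsqf p t
                omega
              rw [if_neg hti0, if_neg hts0] at h0
              rw [Finset.mem_erase]
              exact ⟨hts0, Finset.mem_filter.mpr ⟨Finset.mem_univ t, hMt, by omega⟩⟩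
            have h5 := Finset.card_le_card hsub
            have h6 := Finset.card_erase_of_mem hs0T
            have h7 := Finset.card_pos.mpr ⟨s0, hs0T⟩
            omega
          exact ih p' hdeg' hdv' hcard'
    by_cases hex : ∃ s, s < M ∧ u j s < u i s
    · obtain ⟨s, hsM, hs⟩ := hex
      have h1 := hsqf i s
      have h2 := hdvd s
      exact ⟨s, ⟨⟨M, hsM, hMne⟩, by omega⟩, by omega⟩
    · push_neg at hex
      have hdegi : (∑ x, u i x) < ∑ x, u j x := by
        rcases hlt with h | ⟨heq, t0, ht0, hagree⟩
        · exact h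
        · exfalso
          have ht1 : ∃ t1, u j t1 < u i t1 := by
            by_contra h
            push_neg at h
            have : (∑ x, u i x) < ∑ x, u j x :=
              Finset.sum_lt_sum (fun x _ => h x) ⟨t0, Finset.mem_univ t0, ht0⟩
            omega
          obtain ⟨t1, ht1⟩ := ht1
          have h1 : ¬ t1 < M := fun h => by have := hex t1 h; omega
          have h2 : t1 ≤ t0 := by
            by_contra h
            push_neg at h
            have := hagree t1 h
            omega
          have h3 : t0 ≤ M := hMub t0 (by omega)
          have h4 : t1 ≠ t0 := by
            intro h
            rw [h] at ht1
            omega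
          exact h1 (lt_of_lt_of_le (lt_of_le_of_ne h2 h4) h3)
      exact key _ i hdegi hdvd le_rfl
  · -- reverse direction
    rintro ⟨s, ⟨⟨t, hst, htne⟩, hjs⟩, hws⟩
    obtain ⟨M, hMne, hMub⟩ := exists_max_pred (fun t => u j t ≠ 0) ⟨t, htne⟩
    have hMmax : ∀ t', M < t' → u j t' = 0 := by
      intro t' ht'
      by_contra h
      have := hMub t' h
      omega
    have hsM : s < M := lt_of_lt_of_le hst (hMub t htne)
    obtain ⟨j', c, hc⟩ := hstab j M ⟨hMne, hMmax⟩ s hsM hjs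
    have hsMne : s ≠ M := ne_of_lt hsM
    have hval : ∀ x, u j' x + c x =
        (if x = s then 1 else 0) + (u j x - if x = M then 1 else 0) := by
      intro x
      have h0 := congrFun hc x
      simp only [Pi.add_apply, Pi.sub_apply, Pi.single_apply] at h0
      omega
    have hptw : ∀ x, u j' x + c x + (if x = M then 1 else 0)
        = u j x + (if x = s then 1 else 0) := by
      intro x
      have h0 := hval x
      by_cases hxs : x = s
      · have hxM : ¬ x = M := fun h => hsMne (hxs.symm.trans h)
        rw [if_neg hxM, if_pos hxs] at h0 ⊢
        have h1 : u j x = 0 := by rw [hxs]; exact hjs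
        omega
      · by_cases hxM : x = M
        · rw [if_pos hxM, if_neg hxs] at h0 ⊢
          have h1 : u j x ≠ 0 := by rw [hxM]; exact hMne
          omega
        · rw [if_neg hxM, if_neg hxs] at h0 ⊢
          omega
    have hsums : (∑ x, u j' x) + (∑ x, c x) + 1 = (∑ x, u j x) + 1 := by
      have h2 : (∑ x, (u j' x + c x + (if x = M then 1 else 0)))
          = ∑ x, (u j x + (if x = s then 1 else 0)) :=
        Finset.sum_congr rfl (fun x _ => hptw x)
      simp only [Finset.sum_add_distrib, Finset.sum_ite_eq', Finset.mem_univ, if_pos] at h2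
      omega
    have hrd : rdlexLT (u j) (u j') := by
      by_cases hc0 : (∑ x, c x) = 0
      · right
        refine ⟨by omega, M, ?_, ?_⟩
        · have hcM : c M = 0 :=
            Finset.sum_eq_zero_iff.mp hc0 M (Finset.mem_univ M)
          have h0 := hval M
          rw [if_neg (fun h : M = s => hsMne h.symm), if_pos rfl] at h0
          omega
        · intro s' hs'
          have h0 := hval s'
          have h1 : ¬ s' = s := by
            intro h
            rw [h] at hs'
            omega
          have h2 : ¬ s' = M := ne_of_gt hs'
          rw [if_neg h1, if_neg h2] at h0
          have h3 := hMmax s' hs'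
          omega
      · left
        omega
    have hj'j : j' < j := by
      have hne : u j ≠ u j' := by
        intro h
        rw [← h] at hrd
        exact rdlex_asymm hrd hrd
      rcases lt_trichotomy j' j with h | h | h
      · exact h
      · exact absurd (congrArg u h).symm hne
      · exact absurd (horder j j' h) (fun h2 => rdlex_asymm hrd h2)
    refine ⟨j', hj'j, pi_exists_add_of_le ?_⟩
    intro x
    simp only [Pi.add_apply]
    have h0 := hval x
    by_cases hxs : x = s
    · have hxM : ¬ x = M := fun h => hsMne (hxs.symm.trans h)
      rw [if_neg hxM, if_pos hxs] at h0
      have h1 : w x ≥ 1 := by rw [hxs]; exact hws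
      have h2 : u j x = 0 := by rw [hxs]; exact hjs
      omega
    · by_cases hxM : x = M
      · rw [if_pos hxM, if_neg hxs] at h0
        omega
      · rw [if_neg hxM, if_neg hxs] at h0
        omega
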